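/- For any total recursive function computed by TM_i, the complete enumeration of all indices j such that TM_j computes the same total function as TM_i is not computable in the limit by any property P, l-total or l-partial: there is no limiting-computable P such that for all j, φ_j = φ_i (as total functions) if and only if P(x) = j for some x. -/

import Mathlib

open Nat.Partrec (Code)

/-- `φ i` is the partial recursive function with index `i`. -/
def φ (i : ℕ) : ℕ →. ℕ := (Denumerable.ofNat Code i).eval

/-- `LConv ψ x v`: the guessing function `ψ` on input `x` l-converges in the limit to `v`:
there is a `u` with `ψ x u = v` and for all `t > u`, `ψ x t = v` whenever it converges. -/
def LConv (ψ : ℕ → ℕ →. ℕ) (x v : ℕ) : Prop :=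
  ∃ u, v ∈ ψ x u ∧ ∀ t, u < t → ∀ w ∈ ψ x t, w = v

open Nat.Partrec.Code

namespace Stmt13Aux


theorem primrec_list_all {α} [Primcodable α] {F : α → ℕ → Bool} {g : α → ℕ}
    (hF : Primrec₂ F) (hg : Primrec g) :
    Primrec fun a => (List.range (g a)).all (F a) := by
  have h : Primrec fun a => (List.range (g a)).foldr (fun b s => F a b && s) true :=
    Primrec.list_foldr (Primrec.list_range.comp hg) (Primrec.const true)
      ((Primrec.and.comp (hF.comp Primrec.fst (Primrec.fst.comp Primrec.snd))
        (Primrec.snd.comp Primrec.snd)).to₂)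
  refine h.of_eq fun a => ?_
  induction (List.range (g a)) with
  | nil => simp
  | cons b l ih => simp [ih]

theorem primrec_list_any {α} [Primcodable α] {F : α → ℕ → Bool} {g : α → ℕ}
    (hF : Primrec₂ F) (hg : Primrec g) :
    Primrec fun a => (List.range (g a)).any (F a) := by
  have h : Primrec fun a => (List.range (g a)).foldr (fun b s => F a b || s) false :=
    Primrec.list_foldr (Primrec.list_range.comp hg) (Primrec.const false)
      ((Primrec.or.comp (hF.comp Primrec.fst (Primrec.fst.comp Primrec.snd))
        (Primrec.snd.comp Primrec.snd)).to₂)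
  refine h.of_eq fun a => ?_
  induction (List.range (g a)) with
  | nil => simp
  | cons b l ih => simp [ih]



/-- killer test: at stage `s`, guess position `(x, t)` (with `x = p.unpair.1`) shows a
convergent value different from `e` at some time `t > p.unpair.2`. -/
def inner (cψ : Code) (e s p t : ℕ) : Bool :=
  decide (p.unpair.2 < t ∧ (evaln s cψ (Nat.pair p.unpair.1 t)).isSome = true ∧
    evaln s cψ (Nat.pair p.unpair.1 t) ≠ some e)

def mid (cψ : Code) (e s p : ℕ) : Bool :=
  decide (evaln s cψ p ≠ some e) || (List.range (s + 1)).any (inner cψ e s p)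

def Cb (cψ : Code) (e n s : ℕ) : Bool :=
  decide (n ≤ s) && (List.range (n + 1)).all (mid cψ e s)

theorem cb_iff {cψ : Code} {e n s : ℕ} :
    Cb cψ e n s = true ↔
      n ≤ s ∧ ∀ p ≤ n, evaln s cψ p = some e →
        ∃ t ≤ s, p.unpair.2 < t ∧
          (evaln s cψ (Nat.pair p.unpair.1 t)).isSome = true ∧
          evaln s cψ (Nat.pair p.unpair.1 t) ≠ some e := by
  simp only [Cb, mid, inner, Bool.and_eq_true, List.all_eq_true, List.mem_range,
    Nat.lt_succ_iff, Bool.or_eq_true, List.any_eq_true, decide_eq_true_eq]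
  constructor
  · rintro ⟨h1, h2⟩
    refine ⟨h1, fun p hp hact => ?_⟩
    rcases h2 p hp with h | ⟨t, ht, h⟩
    · exact absurd hact h
    · exact ⟨t, ht, h⟩
  · rintro ⟨h1, h2⟩
    refine ⟨h1, fun p hp => ?_⟩
    by_cases hact : evaln s cψ p = some e
    · rcases h2 p hp hact with ⟨t, ht, h⟩
      exact Or.inr ⟨t, ht, h⟩
    · exact Or.inl hact

end Stmt13Aux

namespace Stmt13Aux

theorem cb_primrec (cψ : Code) :
    Primrec₂ fun (q : ℕ × ℕ) (s : ℕ) => Cb cψ q.1 q.2 s := by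
  have hev : Primrec₂ fun (s m : ℕ) => evaln s cψ m :=
    Primrec.to₂ (primrec_evaln.comp
      (Primrec.pair (Primrec.pair Primrec.fst (Primrec.const cψ)) Primrec.snd))
  have hu : Primrec fun r : (((ℕ×ℕ)×ℕ)×ℕ)×ℕ => r.1.2.unpair.2 :=
    Primrec.snd.comp (Primrec.unpair.comp (Primrec.snd.comp Primrec.fst))
  have hs' : Primrec fun r : (((ℕ×ℕ)×ℕ)×ℕ)×ℕ => r.1.1.2 :=
    Primrec.snd.comp (Primrec.fst.comp Primrec.fst)
  have he' : Primrec fun r : (((ℕ×ℕ)×ℕ)×ℕ)×ℕ => r.1.1.1.1 :=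
    Primrec.fst.comp (Primrec.fst.comp (Primrec.fst.comp Primrec.fst))
  have hx : Primrec fun r : (((ℕ×ℕ)×ℕ)×ℕ)×ℕ => r.1.2.unpair.1 :=
    Primrec.fst.comp (Primrec.unpair.comp (Primrec.snd.comp Primrec.fst))
  have hevr : Primrec fun r : (((ℕ×ℕ)×ℕ)×ℕ)×ℕ =>
      evaln r.1.1.2 cψ (Nat.pair r.1.2.unpair.1 r.2) :=
    hev.comp hs' (Primrec₂.natPair.comp hx Primrec.snd)
  have hinner : Primrec₂ fun (q : ((ℕ×ℕ)×ℕ)×ℕ) (t : ℕ) => inner cψ q.1.1.1 q.1.2 q.2 t := by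
    have c1 : PrimrecPred fun r : (((ℕ×ℕ)×ℕ)×ℕ)×ℕ => r.1.2.unpair.2 < r.2 :=
      Primrec.nat_lt.comp hu Primrec.snd
    have c2 : PrimrecPred fun r : (((ℕ×ℕ)×ℕ)×ℕ)×ℕ =>
        (evaln r.1.1.2 cψ (Nat.pair r.1.2.unpair.1 r.2)).isSome = true :=
      Primrec.eq.comp (Primrec.option_isSome.comp hevr) (Primrec.const true)
    have c3 : PrimrecPred fun r : (((ℕ×ℕ)×ℕ)×ℕ)×ℕ =>
        evaln r.1.1.2 cψ (Nat.pair r.1.2.unpair.1 r.2) ≠ some r.1.1.1.1 :=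
      (Primrec.eq.comp hevr (Primrec.option_some.comp he')).not
    exact Primrec.to₂ (c1.and (c2.and c3)).decide
  have hActAbs : PrimrecPred fun r : ((ℕ×ℕ)×ℕ)×ℕ => evaln r.1.2 cψ r.2 ≠ some r.1.1.1 :=
    (Primrec.eq.comp (hev.comp (Primrec.snd.comp Primrec.fst) Primrec.snd)
      (Primrec.option_some.comp (Primrec.fst.comp (Primrec.fst.comp Primrec.fst)))).not
  have hmid : Primrec₂ fun (q : (ℕ×ℕ)×ℕ) (p : ℕ) => mid cψ q.1.1 q.2 p := by
    have hany : Primrec fun r : ((ℕ×ℕ)×ℕ)×ℕ =>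
        (List.range (r.1.2 + 1)).any (inner cψ r.1.1.1 r.1.2 r.2) :=
      primrec_list_any hinner (Primrec.succ.comp (Primrec.snd.comp Primrec.fst))
    exact Primrec.to₂ (Primrec.or.comp hActAbs.decide hany)
  have hall : Primrec fun q : (ℕ×ℕ)×ℕ => (List.range (q.1.2 + 1)).all (mid cψ q.1.1 q.2) :=
    primrec_list_all hmid (Primrec.succ.comp (Primrec.snd.comp Primrec.fst))
  have hle : PrimrecPred fun q : (ℕ×ℕ)×ℕ => q.1.2 ≤ q.2 :=
    Primrec.nat_le.comp (Primrec.snd.comp Primrec.fst) Primrec.snd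
  exact Primrec.to₂ (Primrec.and.comp hle.decide hall)

end Stmt13Aux

open Stmt13Aux

theorem stmt13 (i : ℕ) (hi : ∀ m, ((φ i) m).Dom) :
    ¬ ∃ ψ : ℕ → ℕ →. ℕ, Partrec₂ ψ ∧
      ∀ j, (∀ m, φ j m = φ i m) ↔ ∃ x, LConv ψ x j := by
  rintro ⟨ψ, hψ, hspec⟩
  obtain ⟨cψ, hcψ⟩ : ∃ cψ : Code, eval cψ = Nat.unpaired ψ :=
    exists_code.mp (Partrec₂.unpaired'.mpr hψ)
  have hψc : ∀ x u, eval cψ (Nat.pair x u) = ψ x u := fun x u => by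
    rw [hcψ]; simp [Nat.unpaired]
  -- the diagonal machine
  set f : Code → ℕ →. ℕ := fun c n =>
    (Nat.rfind fun s => Part.some (Cb cψ (Encodable.encode c) n s)).bind fun _ => φ i n with hfdef
  have hφi : Partrec (φ i) :=
    eval_part.comp (Computable.const (Denumerable.ofNat Code i)) Computable.id
  have hf : Partrec₂ f := by
    have hc : Primrec fun r : (Code × ℕ) × ℕ => Cb cψ (Encodable.encode r.1.1) r.1.2 r.2 :=
      (cb_primrec cψ).comp
        (Primrec.pair (Primrec.encode.comp (Primrec.fst.comp Primrec.fst))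
          (Primrec.snd.comp Primrec.fst)) Primrec.snd
    have hp : Partrec₂ fun (q : Code × ℕ) (s : ℕ) =>
        (Part.some (Cb cψ (Encodable.encode q.1) q.2 s) : Part Bool) :=
      (hc.to₂.to_comp).partrec₂
    have hrf : Partrec fun q : Code × ℕ =>
        Nat.rfind fun s => Part.some (Cb cψ (Encodable.encode q.1) q.2 s) :=
      Partrec.rfind hp
    exact hrf.bind (Partrec.to₂ (hφi.comp (Computable.snd.comp Computable.fst)))
  obtain ⟨c, hc⟩ := fixed_point₂ hf
  set e := Encodable.encode c with he
  have hce : φ e = f c := by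
    show (Denumerable.ofNat Code e).eval = f c
    rw [he, Denumerable.ofNat_encode, hc]
  by_cases hP : ∃ x, LConv ψ x e
  · -- e is a limit value; derive contradiction
    obtain ⟨x, u, hu, hafter⟩ := hP
    have heq : ∀ m, φ e m = φ i m := (hspec e).mpr ⟨x, u, hu, hafter⟩
    -- activation of the true witness is visible by some stage k
    have hu' : e ∈ eval cψ (Nat.pair x u) := by rw [hψc]; exact hu
    obtain ⟨k, hk⟩ := evaln_complete.mp hu'
    set n := max (Nat.pair x u) k with hn
    have hdom : (φ e n).Dom := by rw [heq n]; exact hi n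
    obtain ⟨v, hv⟩ := Part.dom_iff_mem.mp hdom
    rw [hce] at hv
    obtain ⟨s, hs, -⟩ := Part.mem_bind_iff.mp hv
    have hCbs : Cb cψ e n s = true := (Part.mem_some_iff.mp (Nat.rfind_spec hs)).symm
    obtain ⟨hns, hall⟩ := cb_iff.mp hCbs
    have hn1 : Nat.pair x u ≤ n := by rw [hn]; exact le_max_left _ _
    have hn2 : k ≤ n := by rw [hn]; exact le_max_right _ _
    have hact : evaln s cψ (Nat.pair x u) = some e := evaln_mono (le_trans hn2 hns) hk
    obtain ⟨t, hts, hut, hsome, hne'⟩ := hall (Nat.pair x u) hn1 hact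
    rw [Nat.unpair_pair] at hut hsome hne'
    obtain ⟨w, hw⟩ := Option.isSome_iff_exists.mp hsome
    have hwe : w ≠ e := fun h => hne' (by rw [hw, h])
    have hwmem : w ∈ ψ x t := by
      rw [← hψc]; exact evaln_sound (by rw [hw]; rfl : w ∈ evaln s cψ (Nat.pair x t))
    exact hwe (hafter t hut w hwmem)
  · -- e is not a limit value: show φ e = φ i, contradiction
    have hnall : ∀ x, ¬ LConv ψ x e := fun x hx => hP ⟨x, hx⟩
    have claim : ∀ p : ℕ, ∃ sp : ℕ, ∀ s, sp ≤ s → evaln s cψ p = some e →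
        ∃ t ≤ s, p.unpair.2 < t ∧
          (evaln s cψ (Nat.pair p.unpair.1 t)).isSome = true ∧
          evaln s cψ (Nat.pair p.unpair.1 t) ≠ some e := by
      intro p
      by_cases hp : e ∈ eval cψ p
      · have hp' : e ∈ ψ p.unpair.1 p.unpair.2 := by
          rw [← hψc]; rw [Nat.pair_unpair]; exact hp
        have hnl := hnall p.unpair.1
        unfold LConv at hnl
        push_neg at hnl
        obtain ⟨t, hut, w, hw, hwe⟩ := hnl p.unpair.2 hp'
        have hw' : w ∈ eval cψ (Nat.pair p.unpair.1 t) := by rw [hψc]; exact hw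
        obtain ⟨k, hk⟩ := evaln_complete.mp hw'
        refine ⟨max k t, fun s hs _ => ⟨t, le_trans (le_max_right _ _) hs, hut, ?_, ?_⟩⟩
        · have : evaln s cψ (Nat.pair p.unpair.1 t) = some w :=
            evaln_mono (le_trans (le_max_left _ _) hs) hk
          rw [this]; rfl
        · have : evaln s cψ (Nat.pair p.unpair.1 t) = some w :=
            evaln_mono (le_trans (le_max_left _ _) hs) hk
          rw [this]; simp [hwe]
      · exact ⟨0, fun s _ hact => absurd (evaln_sound (hact ▸ rfl : e ∈ evaln s cψ p)) hp⟩
    choose sp hsp using claim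
    have heq : ∀ m, φ e m = φ i m := by
      intro n
      set S := max n ((Finset.range (n + 1)).sup sp) with hS
      have hCbS : Cb cψ e n S = true := by
        refine cb_iff.mpr ⟨le_max_left _ _, fun p hp hact => ?_⟩
        refine hsp p S (le_trans ?_ (le_max_right _ _)) hact
        exact Finset.le_sup (Finset.mem_range.mpr (Nat.lt_succ_of_le hp))
      have hdom : (Nat.rfind fun s => Part.some (Cb cψ e n s)).Dom := by
        refine Nat.rfind_dom.mpr ?_
        exact ⟨S, Part.mem_some_iff.mpr hCbS.symm, fun _ => trivial⟩
      rw [hce]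
      apply Part.ext
      intro v
      rw [show f c n = (Nat.rfind fun s => Part.some (Cb cψ e n s)).bind fun _ => φ i n from rfl]
      rw [Part.mem_bind_iff]
      constructor
      · rintro ⟨s, -, hv⟩; exact hv
      · intro hv
        exact ⟨_, Part.get_mem hdom, hv⟩
    exact hP ((hspec e).mp heq)
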